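/- Let f : [0,1] → 2^[0,1] be upper semicontinuous, surjective, with the intermediate value property. Suppose there exist p, q ∈ (0,1) and r, s ∈ ℕ with 0 ∈ f^r(p) and 1 ∈ f^s(q). Then f is organic: whenever the inverse limit lim←{[0,1], f} is irreducible between points x and y, there exists n ∈ ℕ such that f^n applied to the closed interval with endpoints x_n, y_n equals [0,1]. -/

import Mathlib

open Set Filter Topology

/-- The graph of a set-valued function on `[0,1]`. -/
def GraphSV (f : ℝ → Set ℝ) : Set (ℝ × ℝ) :=
  {p | p.1 ∈ Icc (0:ℝ) 1 ∧ p.2 ∈ f p.1}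

/-- Upper semicontinuous set-valued function `[0,1] → 2^[0,1]`:
nonempty compact values inside `[0,1]` and closed graph. -/
def USC (f : ℝ → Set ℝ) : Prop :=
  (∀ x ∈ Icc (0:ℝ) 1, (f x).Nonempty ∧ f x ⊆ Icc (0:ℝ) 1 ∧ IsCompact (f x)) ∧
    IsClosed (GraphSV f)

/-- The intermediate value property. -/
def IVP (f : ℝ → Set ℝ) : Prop :=
  ∀ x₁ ∈ Icc (0:ℝ) 1, ∀ x₂ ∈ Icc (0:ℝ) 1, x₁ ≠ x₂ →
    ∀ y₁ ∈ f x₁, ∀ y₂ ∈ f x₂, y₁ ≠ y₂ →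
      ∀ y ∈ Ioo (min y₁ y₂) (max y₁ y₂),
        ∃ x ∈ Ioo (min x₁ x₂) (max x₁ x₂), y ∈ f x

/-- The weak intermediate value property. -/
def WIVP (f : ℝ → Set ℝ) : Prop :=
  ∀ x₁ ∈ Icc (0:ℝ) 1, ∀ x₂ ∈ Icc (0:ℝ) 1, x₁ ≠ x₂ →
    ∀ y₁ ∈ f x₁, ∃ y₂ ∈ f x₂,
      ∀ y ∈ Icc (min y₁ y₂) (max y₁ y₂),
        ∃ x ∈ Icc (min x₁ x₂) (max x₁ x₂), y ∈ f x

/-- Weak continuity (from the left and the right) at each interior point. -/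
def WeakCont (f : ℝ → Set ℝ) : Prop :=
  ∀ x ∈ Ioo (0:ℝ) 1, ∀ y ∈ f x,
    (∃ u : ℕ → ℝ × ℝ, (∀ k, u k ∈ GraphSV f ∧ (u k).1 < x) ∧
      Tendsto u atTop (𝓝 (x, y))) ∧
    (∃ u : ℕ → ℝ × ℝ, (∀ k, u k ∈ GraphSV f ∧ x < (u k).1) ∧
      Tendsto u atTop (𝓝 (x, y)))

/-- `f` is almost nonfissile: the nonfissile points of the graph are dense in the graph. -/
def AlmostNonfissile (f : ℝ → Set ℝ) : Prop :=
  GraphSV f ⊆ closure {p | p ∈ GraphSV f ∧ f p.1 = {p.2}}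

/-- `f` is light: each fiber `{x : y ∈ f x}` has empty interior in `[0,1]`. -/
def Light (f : ℝ → Set ℝ) : Prop :=
  ∀ y : ℝ, ∀ U : Set ℝ, IsOpen U → (U ∩ Icc (0:ℝ) 1).Nonempty →
    ∃ x ∈ U ∩ Icc (0:ℝ) 1, y ∉ f x

/-- `f` is surjective onto `[0,1]`. -/
def Surj (f : ℝ → Set ℝ) : Prop :=
  ∀ y ∈ Icc (0:ℝ) 1, ∃ x ∈ Icc (0:ℝ) 1, y ∈ f x

/-- The `n`-fold set-valued composition of `f`. -/
def fIter (f : ℝ → Set ℝ) : ℕ → ℝ → Set ℝ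
  | 0, x => {x}
  | n + 1, x => ⋃ z ∈ fIter f n x, f z

/-- The image `f^n[A] = ⋃_{a ∈ A} f^n(a)`. -/
def imIter (f : ℝ → Set ℝ) (n : ℕ) (A : Set ℝ) : Set ℝ :=
  ⋃ a ∈ A, fIter f n a

/-- The inverse limit of the single bonding function `f` on `[0,1]`. -/
def InvLim (f : ℝ → Set ℝ) : Set (ℕ → ℝ) :=
  {z | (∀ i, z i ∈ Icc (0:ℝ) 1) ∧ ∀ i, z i ∈ f (z (i + 1))}

/-- `X` is irreducible between `x` and `y`: the only subcontinuum of `X`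
containing both is `X` itself. -/
def IrreducibleBetween (X : Set (ℕ → ℝ)) (x y : ℕ → ℝ) : Prop :=
  x ∈ X ∧ y ∈ X ∧
    ∀ K ⊆ X, IsCompact K → IsConnected K → x ∈ K → y ∈ K → K = X

set_option linter.unusedSectionVars false


lemma mem_Icc_of_between {t' t w : ℝ} (ht' : t' ∈ Icc (0:ℝ) 1) (ht : t ∈ Icc (0:ℝ) 1)
    (hw : w ∈ Ioo (min t' t) (max t' t)) : w ∈ Icc (0:ℝ) 1 :=
  ⟨le_trans (le_min ht'.1 ht.1) hw.1.le, le_trans hw.2.le (max_le ht'.2 ht.2)⟩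

lemma abs_lt_of_between {t' t w : ℝ} (hw : w ∈ Ioo (min t' t) (max t' t)) :
    |w - t| < |t' - t| := by
  rcases lt_trichotomy t' t with h | rfl | h
  · rw [min_eq_left h.le, max_eq_right h.le] at hw
    rw [abs_of_nonpos (by linarith [hw.2]), abs_of_nonpos (by linarith)]
    linarith [hw.1]
  · simp at hw
  · rw [min_eq_right h.le, max_eq_left h.le] at hw
    rw [abs_of_nonneg (by linarith [hw.1]), abs_of_nonneg (by linarith)]
    linarith [hw.2]

lemma dist_pair (w t c : ℝ) : dist ((w,c) : ℝ×ℝ) ((t,c) : ℝ×ℝ) = |w - t| := by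
  rw [Prod.dist_eq]; simp [Real.dist_eq]

/-- Values of a USC + IVP function are order-connected (convex). -/
lemma lemA {f : ℝ → Set ℝ} (hf : USC f) (hivp : IVP f)
    {t : ℝ} (ht : t ∈ Icc (0:ℝ) 1) {a b c : ℝ} (ha : a ∈ f t) (hb : b ∈ f t)
    (hac : a ≤ c) (hcb : c ≤ b) : c ∈ f t := by
  rcases eq_or_lt_of_le hac with rfl | hac
  · exact ha
  rcases eq_or_lt_of_le hcb with rfl | hcb
  · exact hb
  have hmem : (t, c) ∈ closure (GraphSV f) := by
    rw [Metric.mem_closure_iff]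
    intro ε hε
    obtain ⟨t', ht'I, ht'ne, ht'close⟩ :
        ∃ t', t' ∈ Icc (0:ℝ) 1 ∧ t' ≠ t ∧ |t' - t| < ε := by
      rcases lt_or_eq_of_le ht.2 with h1 | h1
      · have hδ0 : 0 < min (ε/2) ((1 - t)/2) := lt_min (by linarith) (by linarith)
        have hδ1 : min (ε/2) ((1 - t)/2) ≤ (1-t)/2 := min_le_right _ _
        have hδ2 : min (ε/2) ((1 - t)/2) ≤ ε/2 := min_le_left _ _
        refine ⟨t + min (ε/2) ((1 - t)/2), ⟨by linarith [ht.1], by linarith⟩,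
          by intro h; linarith [hδ0], ?_⟩
        rw [show t + min (ε/2) ((1 - t)/2) - t = min (ε/2) ((1 - t)/2) by ring,
          abs_of_pos hδ0]
        linarith
      · subst h1
        have hδ0 : 0 < min (ε/2) (1/2 : ℝ) := lt_min (by linarith) (by norm_num)
        have hδ1 : min (ε/2) (1/2:ℝ) ≤ 1/2 := min_le_right _ _
        have hδ2 : min (ε/2) (1/2:ℝ) ≤ ε/2 := min_le_left _ _
        refine ⟨1 - min (ε/2) (1/2), ⟨by linarith, by linarith⟩,
          by intro h; linarith [hδ0], ?_⟩
        rw [show 1 - min (ε/2) (1/2) - 1 = -(min (ε/2) (1/2)) by ring, abs_neg,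
          abs_of_pos hδ0]
        linarith
    obtain ⟨y', hy'⟩ := (hf.1 t' ht'I).1
    rcases lt_trichotomy y' c with hyc | rfl | hyc
    · have hy'b : y' < b := hyc.trans hcb
      obtain ⟨w, hw, hcw⟩ := hivp t' ht'I t ht ht'ne y' hy' b hb hy'b.ne c
        ⟨by rw [min_eq_left hy'b.le]; exact hyc, by rw [max_eq_right hy'b.le]; exact hcb⟩
      refine ⟨(w, c), ⟨mem_Icc_of_between ht'I ht hw, hcw⟩, ?_⟩
      rw [dist_comm, dist_pair]
      exact (abs_lt_of_between hw).trans ht'close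
    · exact ⟨(t', y'), ⟨ht'I, hy'⟩, by rw [dist_comm, dist_pair]; exact ht'close⟩
    · have hay' : a < y' := hac.trans hyc
      obtain ⟨w, hw, hcw⟩ := hivp t ht t' ht'I (Ne.symm ht'ne) a ha y' hy' hay'.ne c
        ⟨by rw [min_eq_left hay'.le]; exact hac, by rw [max_eq_right hay'.le]; exact hyc⟩
      have hw' : w ∈ Ioo (min t' t) (max t' t) := by rwa [min_comm, max_comm]
      refine ⟨(w, c), ⟨mem_Icc_of_between ht'I ht hw', hcw⟩, ?_⟩
      rw [dist_comm, dist_pair]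
      exact (abs_lt_of_between hw').trans ht'close
  exact (hf.2.closure_subset hmem).2

lemma imIter_zero (f : ℝ → Set ℝ) (A : Set ℝ) : imIter f 0 A = A := by
  simp [imIter, fIter]

lemma imIter_succ (f : ℝ → Set ℝ) (n : ℕ) (A : Set ℝ) :
    imIter f (n+1) A = ⋃ b ∈ imIter f n A, f b := by
  simp only [imIter, fIter]
  ext v; simp only [mem_iUnion]
  constructor
  · rintro ⟨a, ha, z, hz, hv⟩; exact ⟨z, ⟨a, ha, hz⟩, hv⟩
  · rintro ⟨z, ⟨a, ha, hz⟩, hv⟩; exact ⟨a, ha, z, hz, hv⟩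

lemma imIter_mono (f : ℝ → Set ℝ) (n : ℕ) {A B : Set ℝ} (h : A ⊆ B) :
    imIter f n A ⊆ imIter f n B := by
  intro v hv
  rcases mem_iUnion₂.1 hv with ⟨a, ha, hv⟩
  exact mem_iUnion₂.2 ⟨a, h ha, hv⟩

lemma imIter_add (f : ℝ → Set ℝ) (m n : ℕ) (A : Set ℝ) :
    imIter f (m + n) A = imIter f m (imIter f n A) := by
  induction m with
  | zero => simp [imIter_zero]
  | succ k ih =>
      have : k + n + 1 = (k + n) + 1 := rfl
      rw [show k + 1 + n = (k + n) + 1 by omega, imIter_succ, imIter_succ, ih]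

lemma mem_imIter_of_mem {f : ℝ → Set ℝ} {n : ℕ} {A : Set ℝ} {a : ℝ} (ha : a ∈ A)
    {v : ℝ} (hv : v ∈ fIter f n a) : v ∈ imIter f n A :=
  mem_iUnion₂.2 ⟨a, ha, hv⟩

lemma fIter_subset_imIter {f : ℝ → Set ℝ} {n : ℕ} {A : Set ℝ} {a : ℝ} (ha : a ∈ A) :
    fIter f n a ⊆ imIter f n A := fun _ hv => mem_imIter_of_mem ha hv

/-- Lemma G appended -/
lemma lemG {α β : Type*} [TopologicalSpace α] [TopologicalSpace β]
    [T2Space α] [NormalSpace α] [T2Space β]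
    {K : Set α} (hK : IsCompact K) {g : α → β} (hg : Continuous g)
    (him : IsPreconnected (g '' K))
    (hfib : ∀ t ∈ g '' K, IsPreconnected (K ∩ g ⁻¹' {t})) :
    IsPreconnected K := by
  have hKcl : IsClosed K := hK.isClosed
  rw [isPreconnected_iff_subset_of_fully_disjoint_closed hKcl]
  intro u v hu hv hcov hdisj
  have hfib' : ∀ t ∈ g '' K, (K ∩ g ⁻¹' {t}) ⊆ u ∨ (K ∩ g ⁻¹' {t}) ⊆ v := by
    intro t ht
    have hcl : IsClosed (K ∩ g ⁻¹' {t}) := hKcl.inter (isClosed_singleton.preimage hg)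
    exact (isPreconnected_iff_subset_of_fully_disjoint_closed hcl).1 (hfib t ht) u v hu hv
      ((inter_subset_left).trans hcov) hdisj
  have h1 : IsCompact (K ∩ u) := hK.inter_right hu
  have h2 : IsCompact (K ∩ v) := hK.inter_right hv
  have hA : g '' K ⊆ g '' (K ∩ u) ∪ g '' (K ∩ v) := by
    rintro t ⟨z, hz, rfl⟩
    rcases hcov hz with h | h
    · exact Or.inl ⟨z, ⟨hz, h⟩, rfl⟩
    · exact Or.inr ⟨z, ⟨hz, h⟩, rfl⟩
  have hdisj' : Disjoint (g '' (K ∩ u)) (g '' (K ∩ v)) := by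
    rw [disjoint_left]
    rintro t ⟨z, ⟨hzK, hzu⟩, rfl⟩ ⟨w, ⟨hwK, hwv⟩, hw⟩
    have htim : g z ∈ g '' K := ⟨z, hzK, rfl⟩
    rcases hfib' _ htim with h | h
    · exact hdisj.le_bot ⟨h ⟨hwK, by simp [hw]⟩, hwv⟩
    · exact hdisj.le_bot ⟨hzu, h ⟨hzK, rfl⟩⟩
  have himcl : IsClosed (g '' K) := (hK.image hg).isClosed
  have := (isPreconnected_iff_subset_of_fully_disjoint_closed himcl).1 him
      (g '' (K ∩ u)) (g '' (K ∩ v)) (h1.image hg).isClosed (h2.image hg).isClosed hA hdisj'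
  rcases this with h | h
  · left
    intro z hz
    have hgz : g z ∈ g '' (K ∩ u) := h ⟨z, hz, rfl⟩
    rcases hfib' (g z) ⟨z, hz, rfl⟩ with hf | hf
    · exact (hf ⟨hz, rfl⟩)
    · rcases hgz with ⟨w, ⟨hwK, hwu⟩, hw⟩
      exact absurd (hf ⟨hwK, by simp [hw]⟩) (fun hwv => hdisj.le_bot ⟨hwu, hwv⟩)
  · right
    intro z hz
    have hgz : g z ∈ g '' (K ∩ v) := h ⟨z, hz, rfl⟩
    rcases hfib' (g z) ⟨z, hz, rfl⟩ with hf | hf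
    · rcases hgz with ⟨w, ⟨hwK, hwv⟩, hw⟩
      exact absurd (hf ⟨hwK, by simp [hw]⟩) (fun hwu => hdisj.le_bot ⟨hwu, hwv⟩)
    · exact (hf ⟨hz, rfl⟩)

/-- bundled "nice" property -/
def Nice (A : Set ℝ) : Prop :=
  A.Nonempty ∧ IsCompact A ∧ IsPreconnected A ∧ A ⊆ Icc (0:ℝ) 1

lemma value_preconnected {f : ℝ → Set ℝ} (hf : USC f) (hivp : IVP f)
    {t : ℝ} (ht : t ∈ Icc (0:ℝ) 1) : IsPreconnected (f t) := by
  have : OrdConnected (f t) := ⟨fun a ha b hb c hc => lemA hf hivp ht ha hb hc.1 hc.2⟩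
  exact this.isPreconnected

lemma imIter_one {f : ℝ → Set ℝ} (A : Set ℝ) : imIter f 1 A = ⋃ a ∈ A, f a := by
  rw [show (1:ℕ) = 0 + 1 from rfl, imIter_succ, imIter_zero]

lemma mem_imIter_one {f : ℝ → Set ℝ} {A : Set ℝ} {a v : ℝ} (ha : a ∈ A) (hv : v ∈ f a) :
    v ∈ imIter f 1 A := by
  rw [imIter_one]; exact mem_iUnion₂.2 ⟨a, ha, hv⟩

lemma value_subset_imIter_one {f : ℝ → Set ℝ} {A : Set ℝ} {a : ℝ} (ha : a ∈ A) :
    f a ⊆ imIter f 1 A := fun _ hv => mem_imIter_one ha hv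

lemma graphA_eq {f : ℝ → Set ℝ} {A : Set ℝ} (hA : A ⊆ Icc (0:ℝ) 1) :
    GraphSV f ∩ (A ×ˢ (univ : Set ℝ)) = {z : ℝ × ℝ | z.1 ∈ A ∧ z.2 ∈ f z.1} := by
  ext z
  simp only [Graph, mem_inter_iff, mem_setOf_eq, mem_prod, mem_univ, and_true]
  exact ⟨fun h => ⟨h.2, h.1.2⟩, fun h => ⟨⟨hA h.1, h.2⟩, h.1⟩⟩

lemma lemB {f : ℝ → Set ℝ} (hf : USC f) (hivp : IVP f) {A : Set ℝ} (hA : Nice A) :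
    Nice (imIter f 1 A) := by
  obtain ⟨hAne, hAcpt, hApre, hAsub⟩ := hA
  set G : Set (ℝ × ℝ) := GraphSV f ∩ (A ×ˢ (univ : Set ℝ)) with hG
  have hGdesc : G = {z : ℝ × ℝ | z.1 ∈ A ∧ z.2 ∈ f z.1} := graphA_eq hAsub
  have hGsub : G ⊆ (Icc (0:ℝ) 1) ×ˢ (Icc (0:ℝ) 1) := by
    rw [hGdesc]
    rintro ⟨z1, z2⟩ ⟨h1, h2⟩
    exact ⟨hAsub h1, (hf.1 z1 (hAsub h1)).2.1 h2⟩
  have hGcl : IsClosed G := hf.2.inter (hAcpt.isClosed.prod isClosed_univ)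
  have hGcpt : IsCompact G := (isCompact_Icc.prod isCompact_Icc).of_isClosed_subset hGcl hGsub
  have hGim : Prod.fst '' G = A := by
    ext a
    constructor
    · rintro ⟨z, hz, rfl⟩
      exact (hGdesc ▸ hz).1
    · intro ha
      obtain ⟨v, hv⟩ := (hf.1 a (hAsub ha)).1
      exact ⟨(a, v), hGdesc ▸ ⟨ha, hv⟩, rfl⟩
  have hGpre : IsPreconnected G := by
    apply lemG hGcpt continuous_fst (by rw [hGim]; exact hApre)
    intro t htim
    rw [hGim] at htim
    have hfib : G ∩ Prod.fst ⁻¹' {t} = {t} ×ˢ (f t) := by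
      ext z
      simp only [hGdesc, mem_inter_iff, mem_setOf_eq, mem_preimage, mem_singleton_iff,
        mem_prod]
      constructor
      · rintro ⟨⟨h1, h2⟩, rfl⟩; exact ⟨rfl, h2⟩
      · rintro ⟨rfl, h2⟩; exact ⟨⟨htim, h2⟩, rfl⟩
    rw [hfib]
    exact isPreconnected_singleton.prod (value_preconnected hf hivp (hAsub htim))
  have hIm : imIter f 1 A = Prod.snd '' G := by
    rw [imIter_one]
    ext v
    simp only [mem_iUnion, mem_image, hGdesc, mem_setOf_eq]
    constructor
    · rintro ⟨a, ha, hv⟩; exact ⟨(a, v), ⟨ha, hv⟩, rfl⟩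
    · rintro ⟨⟨a, w⟩, ⟨ha, hw⟩, rfl⟩; exact ⟨a, ha, hw⟩
  refine ⟨?_, ?_, ?_, ?_⟩
  · obtain ⟨a, ha⟩ := hAne
    obtain ⟨v, hv⟩ := (hf.1 a (hAsub ha)).1
    exact ⟨v, mem_imIter_one ha hv⟩
  · rw [hIm]; exact hGcpt.image continuous_snd
  · rw [hIm]; exact hGpre.image _ continuous_snd.continuousOn
  · rw [imIter_one]
    exact iUnion₂_subset fun a ha => (hf.1 a (hAsub ha)).2.1

lemma lemBk {f : ℝ → Set ℝ} (hf : USC f) (hivp : IVP f) {A : Set ℝ} (hA : Nice A) (k : ℕ) :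
    Nice (imIter f k A) := by
  induction k with
  | zero => rwa [imIter_zero]
  | succ n ih =>
      have : imIter f (n+1) A = imIter f 1 (imIter f n A) := by
        rw [← imIter_add, Nat.add_comm]
      rw [this]
      exact lemB hf hivp ih

/-- chain membership downward -/
lemma chain_mem {f : ℝ → Set ℝ} {z : ℕ → ℝ} (hz : z ∈ InvLim f) (m k : ℕ) :
    z m ∈ fIter f k (z (m + k)) := by
  induction k generalizing m with
  | zero => simp [fIter]
  | succ n ih =>
      show z m ∈ ⋃ w ∈ fIter f n (z (m + (n+1))), f w
      refine mem_iUnion₂.2 ⟨z (m+1), ?_, hz.2 m⟩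
      have := ih (m+1)
      rwa [show m + 1 + n = m + (n+1) by omega] at this

section XY

variable {f : ℝ → Set ℝ} {x y : ℕ → ℝ}

/-- the interval at level n -/
def Iv (x y : ℕ → ℝ) (n : ℕ) : Set ℝ := uIcc (x n) (y n)

/-- the union of forward images from higher levels -/
def Useq (f : ℝ → Set ℝ) (x y : ℕ → ℝ) (n : ℕ) : Set ℝ :=
  ⋃ k, imIter f k (Iv x y (n + k))

/-- closure -/
def Sseq (f : ℝ → Set ℝ) (x y : ℕ → ℝ) (n : ℕ) : Set ℝ := closure (Useq f x y n)

lemma nice_Iv (hx : x ∈ InvLim f) (hy : y ∈ InvLim f) (n : ℕ) : Nice (Iv x y n) := by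
  refine ⟨nonempty_uIcc, isCompact_uIcc, ordConnected_uIcc.isPreconnected, ?_⟩
  exact (ordConnected_Icc).uIcc_subset (hx.1 n) (hy.1 n)

variable (hf : USC f) (hivp : IVP f) (hx : x ∈ InvLim f) (hy : y ∈ InvLim f)
include hf hivp hx hy

lemma nice_J (n k : ℕ) : Nice (imIter f k (Iv x y (n + k))) :=
  lemBk hf hivp (nice_Iv hx hy (n+k)) k

lemma x_mem_J (n k : ℕ) : x n ∈ imIter f k (Iv x y (n + k)) :=
  mem_imIter_of_mem left_mem_uIcc (chain_mem hx n k)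

lemma Iv_subset_im (m : ℕ) : Iv x y m ⊆ imIter f 1 (Iv x y (m + 1)) := by
  have hpre : IsPreconnected (imIter f 1 (Iv x y (m+1))) :=
    (lemB hf hivp (nice_Iv hx hy (m+1))).2.2.1
  have hxm : x m ∈ imIter f 1 (Iv x y (m+1)) :=
    mem_imIter_one left_mem_uIcc (hx.2 m)
  have hym : y m ∈ imIter f 1 (Iv x y (m+1)) :=
    mem_imIter_one right_mem_uIcc (hy.2 m)
  exact hpre.ordConnected.uIcc_subset hxm hym

lemma J_mono (n k : ℕ) :
    imIter f k (Iv x y (n + k)) ⊆ imIter f (k+1) (Iv x y (n + (k+1))) := by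
  have h1 : imIter f k (Iv x y (n+k)) ⊆ imIter f k (imIter f 1 (Iv x y (n+k+1))) :=
    imIter_mono f k (Iv_subset_im hf hivp hx hy (n+k))
  rw [← imIter_add] at h1
  rw [show n + (k+1) = n + k + 1 by omega]
  rwa [show k + 1 = k + 1 from rfl]

lemma J_mono_le (n : ℕ) {k k' : ℕ} (h : k ≤ k') :
    imIter f k (Iv x y (n + k)) ⊆ imIter f k' (Iv x y (n + k')) := by
  induction k' with
  | zero => rw [Nat.le_zero] at h; subst h; exact subset_rfl
  | succ m ih =>
      rcases Nat.lt_or_ge k (m+1) with hlt | hge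
      · exact (ih (by omega)).trans (J_mono hf hivp hx hy n m)
      · have : k = m + 1 := by omega
        subst this; exact subset_rfl

lemma U_subset_Icc (n : ℕ) : Useq f x y n ⊆ Icc (0:ℝ) 1 :=
  iUnion_subset fun k => (nice_J hf hivp hx hy n k).2.2.2

lemma x_mem_U (n : ℕ) : x n ∈ Useq f x y n :=
  mem_iUnion.2 ⟨0, x_mem_J hf hivp hx hy n 0⟩

lemma U_preconnected (n : ℕ) : IsPreconnected (Useq f x y n) :=
  isPreconnected_iUnion ⟨x n, mem_iInter.2 fun k => x_mem_J hf hivp hx hy n k⟩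
    fun k => (nice_J hf hivp hx hy n k).2.2.1

lemma nice_S (n : ℕ) : Nice (Sseq f x y n) := by
  refine ⟨⟨x n, subset_closure (x_mem_U hf hivp hx hy n)⟩, ?_, ?_, ?_⟩
  · exact isCompact_Icc.of_isClosed_subset isClosed_closure
      (closure_minimal (U_subset_Icc hf hivp hx hy n) isClosed_Icc)
  · exact (U_preconnected hf hivp hx hy n).closure
  · exact closure_minimal (U_subset_Icc hf hivp hx hy n) isClosed_Icc

end XY

/-- a point strictly between a member of an ordConnected set and a closure point is in the set -/
lemma lemW {U : Set ℝ} (hU : OrdConnected U) {t' t w : ℝ} (ht' : t' ∈ U)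
    (ht : t ∈ closure U) (hw : w ∈ Ioo (min t' t) (max t' t)) : w ∈ U := by
  rcases lt_trichotomy t' t with h | rfl | h
  · rw [min_eq_left h.le, max_eq_right h.le] at hw
    obtain ⟨t'', ht''U, ht''d⟩ := Metric.mem_closure_iff.1 ht (t - w) (by linarith [hw.2])
    rw [Real.dist_eq, abs_sub_lt_iff] at ht''d
    exact hU.out ht' ht''U ⟨hw.1.le, by linarith [ht''d.1]⟩
  · simp at hw
  · rw [min_eq_right h.le, max_eq_left h.le] at hw
    obtain ⟨t'', ht''U, ht''d⟩ := Metric.mem_closure_iff.1 ht (w - t) (by linarith [hw.1])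
    rw [Real.dist_eq, abs_sub_lt_iff] at ht''d
    exact hU.out ht''U ht' ⟨by linarith [ht''d.2], hw.2.le⟩

section XY2
variable {f : ℝ → Set ℝ} {x y : ℕ → ℝ}
variable (hf : USC f) (hivp : IVP f) (hx : x ∈ InvLim f) (hy : y ∈ InvLim f)
include hf hivp hx hy

lemma fU_subset (n : ℕ) {w : ℝ} (hw : w ∈ Useq f x y (n+1)) : f w ⊆ Useq f x y n := by
  obtain ⟨k, hk⟩ := mem_iUnion.1 hw
  intro v hv
  have : v ∈ imIter f 1 (imIter f k (Iv x y (n+1+k))) := mem_imIter_one hk hv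
  rw [← imIter_add] at this
  rw [Nat.add_comm 1 k] at this
  exact mem_iUnion.2 ⟨k+1, by rwa [show n + (k+1) = n+1+k by omega]⟩

/-- invariance: values at points of S (n+1) stay in S n -/
lemma S_invariant (n : ℕ) {t : ℝ} (ht : t ∈ Sseq f x y (n+1)) : f t ⊆ Sseq f x y n := by
  intro v hv
  have htI : t ∈ Icc (0:ℝ) 1 := (nice_S hf hivp hx hy (n+1)).2.2.2 ht
  by_cases htU : t ∈ Useq f x y (n+1)
  · exact subset_closure (fU_subset hf hivp hx hy n htU hv)
  -- t is a closure point not in U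
  rw [Sseq, Metric.mem_closure_iff]
  intro ε hε
  have hUx : x (n+1) ∈ Useq f x y (n+1) := x_mem_U hf hivp hx hy (n+1)
  set t' := x (n+1) with ht'def
  have ht'U : t' ∈ Useq f x y (n+1) := hUx
  have ht'ne : t' ≠ t := fun h => htU (h ▸ ht'U)
  have ht'I : t' ∈ Icc (0:ℝ) 1 := U_subset_Icc hf hivp hx hy (n+1) ht'U
  obtain ⟨y', hy'⟩ := (hf.1 t' ht'I).1
  rcases eq_or_ne y' v with rfl | hne
  · exact ⟨y', fU_subset hf hivp hx hy n ht'U hy', by simpa using hε⟩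
  -- pick y strictly between v and y' with |v - y| < ε
  have hUord : OrdConnected (Useq f x y (n+1)) :=
    (U_preconnected hf hivp hx hy (n+1)).ordConnected
  rcases lt_or_gt_of_ne hne with hlt | hgt
  · -- y' < v
    set d := min (ε/2) ((v - y')/2) with hd
    have hd0 : 0 < d := lt_min (by linarith) (by linarith)
    have hd1 : d ≤ (v - y')/2 := min_le_right _ _
    have hd2 : d ≤ ε/2 := min_le_left _ _
    have hymem : v - d ∈ Ioo (min y' v) (max y' v) :=
      ⟨by rw [min_eq_left hlt.le]; linarith, by rw [max_eq_right hlt.le]; linarith⟩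
    obtain ⟨w, hwI, hww⟩ := hivp t' ht'I t htI ht'ne y' hy' v hv hne (v - d) hymem
    have hwU : w ∈ Useq f x y (n+1) := lemW hUord ht'U ht hwI
    refine ⟨v - d, fU_subset hf hivp hx hy n hwU hww, ?_⟩
    rw [Real.dist_eq, abs_of_nonneg (by linarith : (0:ℝ) ≤ v - (v - d))]
    linarith
  · -- v < y'
    set d := min (ε/2) ((y' - v)/2) with hd
    have hd0 : 0 < d := lt_min (by linarith) (by linarith)
    have hd1 : d ≤ (y' - v)/2 := min_le_right _ _
    have hd2 : d ≤ ε/2 := min_le_left _ _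
    have hymem : v + d ∈ Ioo (min y' v) (max y' v) :=
      ⟨by rw [min_eq_right hgt.le]; linarith, by rw [max_eq_left hgt.le]; linarith⟩
    obtain ⟨w, hwI, hww⟩ := hivp t' ht'I t htI ht'ne y' hy' v hv hne (v + d) hymem
    have hwU : w ∈ Useq f x y (n+1) := lemW hUord ht'U ht hwI
    refine ⟨v + d, fU_subset hf hivp hx hy n hwU hww, ?_⟩
    rw [Real.dist_eq, abs_of_nonpos (by linarith : v - (v + d) ≤ 0)]
    linarith

end XY2

/-- every point of [0,1] occurs as the n-th coordinate of a point of the inverse limit -/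
lemma orbit_exists {f : ℝ → Set ℝ} (hf : USC f) (hsurj : Surj f)
    {t : ℝ} (ht : t ∈ Icc (0:ℝ) 1) (n : ℕ) : ∃ z ∈ InvLim f, z n = t := by
  classical
  have h1 : ∀ u : ℝ, ∃ v, (u ∈ Icc (0:ℝ) 1 → v ∈ f u ∧ v ∈ Icc (0:ℝ) 1) := by
    intro u
    by_cases hu : u ∈ Icc (0:ℝ) 1
    · obtain ⟨v, hv⟩ := (hf.1 u hu).1
      exact ⟨v, fun _ => ⟨hv, (hf.1 u hu).2.1 hv⟩⟩
    · exact ⟨0, fun h => absurd h hu⟩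
  choose dn hdn using h1
  have h2 : ∀ u : ℝ, ∃ v, (u ∈ Icc (0:ℝ) 1 → v ∈ Icc (0:ℝ) 1 ∧ u ∈ f v) := by
    intro u
    by_cases hu : u ∈ Icc (0:ℝ) 1
    · obtain ⟨v, hv1, hv2⟩ := hsurj u hu
      exact ⟨v, fun _ => ⟨hv1, hv2⟩⟩
    · exact ⟨0, fun h => absurd h hu⟩
  choose up hup using h2
  have hdnIcc : ∀ k, dn^[k] t ∈ Icc (0:ℝ) 1 := by
    intro k
    induction k with
    | zero => simpa using ht
    | succ j ih => rw [Function.iterate_succ_apply']; exact (hdn _ ih).2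
  have hupIcc : ∀ k, up^[k] t ∈ Icc (0:ℝ) 1 := by
    intro k
    induction k with
    | zero => simpa using ht
    | succ j ih => rw [Function.iterate_succ_apply']; exact (hup _ ih).1
  refine ⟨fun i => if i ≤ n then dn^[n - i] t else up^[i - n] t, ⟨?_, ?_⟩, ?_⟩
  · intro i
    by_cases h : i ≤ n
    · simpa [h] using hdnIcc (n - i)
    · simpa [h] using hupIcc (i - n)
  · intro i
    by_cases h : i + 1 ≤ n
    · have hi : i ≤ n := by omega
      have hni : n - i = (n - (i+1)) + 1 := by omega
      simp only [hi, h, if_pos]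
      rw [hni, Function.iterate_succ_apply']
      exact (hdn _ (hdnIcc (n - (i+1)))).1
    · have h2' : ¬ (i + 1 ≤ n) := h
      by_cases hi : i ≤ n
      · have hin : i = n := by omega
        subst hin
        simp only [le_refl, if_pos, if_neg h2']
        have : i + 1 - i = 1 := by omega
        rw [this, Nat.sub_self]
        simpa using (hup t ht).2
      · simp only [if_neg hi, if_neg h2']
        have : i + 1 - n = (i - n) + 1 := by omega
        rw [this, Function.iterate_succ_apply']
        exact (hup _ (hupIcc (i - n))).2
  · simp

/-- the constrained Mahavier sets -/
def Qset (f : ℝ → Set ℝ) (x y : ℕ → ℝ) (m : ℕ) (A : Set ℝ) : Set (ℕ → ℝ) :=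
  {z | (∀ n, z n ∈ Sseq f x y n) ∧ (∀ i, i < m → z i ∈ f (z (i+1))) ∧ z m ∈ A}

lemma isCompact_piIcc : IsCompact {z : ℕ → ℝ | ∀ i, z i ∈ Icc (0:ℝ) 1} := by
  have := isCompact_univ_pi (fun _ : ℕ => isCompact_Icc (a := (0:ℝ)) (b := 1))
  convert this using 1
  ext z; simp only [Set.mem_univ_pi, Set.mem_setOf_eq]

section QM
variable {f : ℝ → Set ℝ} {x y : ℕ → ℝ}
variable (hf : USC f) (hivp : IVP f) (hx : x ∈ InvLim f) (hy : y ∈ InvLim f)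
include hf hivp hx hy

lemma Q_closed {m : ℕ} {A : Set ℝ} (hA : IsClosed A) : IsClosed (Qset f x y m A) := by
  have heq : Qset f x y m A =
      (⋂ n, (fun z : ℕ → ℝ => z n) ⁻¹' Sseq f x y n) ∩
      ((⋂ i, ⋂ (_ : i < m), (fun z : ℕ → ℝ => (z (i+1), z i)) ⁻¹' GraphSV f) ∩
        (fun z : ℕ → ℝ => z m) ⁻¹' A) := by
    ext z
    simp only [Qset, mem_setOf_eq, mem_inter_iff, mem_iInter, mem_preimage]
    constructor
    · rintro ⟨hS, hch, hm⟩
      refine ⟨hS, ⟨fun i hi => ⟨?_, hch i hi⟩, hm⟩⟩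
      exact (nice_S hf hivp hx hy (i+1)).2.2.2 (hS (i+1))
    · rintro ⟨hS, ⟨hch, hm⟩⟩
      exact ⟨hS, fun i hi => (hch i hi).2, hm⟩
  rw [heq]
  refine IsClosed.inter (isClosed_iInter fun n => ?_) (IsClosed.inter
    (isClosed_iInter fun i => isClosed_iInter fun _ => ?_) (hA.preimage (continuous_apply m)))
  · exact isClosed_closure.preimage (continuous_apply n)
  · exact hf.2.preimage ((continuous_apply (i+1)).prodMk (continuous_apply i))

lemma Q_subset_piIcc (m : ℕ) (A : Set ℝ) :
    Qset f x y m A ⊆ {z : ℕ → ℝ | ∀ i, z i ∈ Icc (0:ℝ) 1} :=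
  fun z hz i => (nice_S hf hivp hx hy i).2.2.2 (hz.1 i)

lemma Q_compact {m : ℕ} {A : Set ℝ} (hA : IsClosed A) : IsCompact (Qset f x y m A) :=
  isCompact_piIcc.of_isClosed_subset (Q_closed hf hivp hx hy hA)
    (Q_subset_piIcc hf hivp hx hy m A)

lemma Q_nonempty_top (m : ℕ) {A : Set ℝ} {a : ℝ} (ha : a ∈ A)
    (hA : A ⊆ Sseq f x y m) : ∃ z ∈ Qset f x y m A, z m = a := by
  classical
  have h1 : ∀ u : ℝ, ∃ v, (u ∈ Icc (0:ℝ) 1 → v ∈ f u) := by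
    intro u
    by_cases hu : u ∈ Icc (0:ℝ) 1
    · obtain ⟨v, hv⟩ := (hf.1 u hu).1
      exact ⟨v, fun _ => hv⟩
    · exact ⟨0, fun h => absurd h hu⟩
  choose dn hdn using h1
  have hw : ∀ k, k ≤ m → dn^[k] a ∈ Sseq f x y (m - k) := by
    intro k
    induction k with
    | zero => intro _; simpa using hA ha
    | succ j ih =>
        intro hjm
        have hj : j ≤ m := by omega
        have hSj := ih hj
        have hIcc : dn^[j] a ∈ Icc (0:ℝ) 1 := (nice_S hf hivp hx hy (m-j)).2.2.2 hSj
        have hmj : m - j = (m - (j+1)) + 1 := by omega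
        rw [Function.iterate_succ_apply']
        rw [hmj] at hSj
        exact S_invariant hf hivp hx hy (m - (j+1)) hSj (hdn _ hIcc)
  refine ⟨fun i => if i ≤ m then dn^[m - i] a else x i, ⟨?_, ?_, ?_⟩, ?_⟩
  · intro i
    by_cases h : i ≤ m
    · have : m - (m - i) = i := by omega
      simpa [h, this] using hw (m - i) (by omega)
    · simpa [h, Sseq] using subset_closure (x_mem_U hf hivp hx hy i)
  · intro i hi
    have h1' : i ≤ m := by omega
    have h2' : i + 1 ≤ m := by omega
    simp only [h1', h2', if_pos]
    have : m - i = (m - (i+1)) + 1 := by omega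
    rw [this, Function.iterate_succ_apply']
    have hSj := hw (m - (i+1)) (by omega)
    exact hdn _ ((nice_S hf hivp hx hy _).2.2.2 hSj)
  · simpa using ha
  · simpa using rfl

end QM

section QP
variable {f : ℝ → Set ℝ} {x y : ℕ → ℝ}
variable (hf : USC f) (hivp : IVP f) (hx : x ∈ InvLim f) (hy : y ∈ InvLim f)
include hf hivp hx hy

lemma Q_preconnected : ∀ (m : ℕ) (A : Set ℝ), IsCompact A → IsPreconnected A →
    A ⊆ Sseq f x y m → IsPreconnected (Qset f x y m A) := by
  intro m
  induction m with
  | zero =>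
      intro A hA1 hA2 hA3
      have heq : Qset f x y 0 A =
          univ.pi (fun n => if n = 0 then A else Sseq f x y n) := by
        ext z
        simp only [Qset, mem_setOf_eq, Set.mem_univ_pi]
        constructor
        · rintro ⟨hS, _, h0⟩
          intro i
          by_cases hi : i = 0
          · subst hi; simpa using h0
          · simpa [hi] using hS i
        · intro h
          refine ⟨fun n => ?_, fun i hi => absurd hi (Nat.not_lt_zero i), ?_⟩
          · by_cases hn : n = 0
            · subst hn; exact hA3 (by simpa using h 0)
            · simpa [hn] using h n
          · simpa using h 0
      rw [heq]
      apply isPreconnected_univ_pi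
      intro i
      by_cases hi : i = 0
      · simpa [hi] using hA2
      · simpa [hi] using (nice_S hf hivp hx hy i).2.2.1
  | succ m ih =>
      intro A hA1 hA2 hA3
      have hKc : IsCompact (Qset f x y (m+1) A) := Q_compact hf hivp hx hy hA1.isClosed
      have him : (fun z : ℕ → ℝ => z (m+1)) '' Qset f x y (m+1) A = A := by
        apply Subset.antisymm
        · rintro t ⟨z, hz, rfl⟩
          exact hz.2.2
        · intro t htA
          have htS : t ∈ Sseq f x y (m+1) := hA3 htA
          have htI : t ∈ Icc (0:ℝ) 1 := (nice_S hf hivp hx hy (m+1)).2.2.2 htS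
          obtain ⟨v, hv⟩ := (hf.1 t htI).1
          obtain ⟨z, hz, hzm⟩ := Q_nonempty_top hf hivp hx hy m hv
            (S_invariant hf hivp hx hy m htS)
          refine ⟨Function.update z (m+1) t, ⟨?_, ?_, ?_⟩, ?_⟩
          · intro n
            by_cases hn : n = m+1
            · subst hn; simpa using htS
            · simpa [Function.update_of_ne hn] using hz.1 n
          · intro i hi
            by_cases hi' : i = m
            · rw [hi', Function.update_of_ne (by omega : m ≠ m+1), Function.update_self, hzm]
              exact hv
            · rw [Function.update_of_ne (by omega : i ≠ m+1),
                Function.update_of_ne (by omega : i+1 ≠ m+1)]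
              exact hz.2.1 i (by omega)
          · simpa using htA
          · simp
      have hfib : ∀ t ∈ A,
          Qset f x y (m+1) A ∩ (fun z : ℕ → ℝ => z (m+1)) ⁻¹' {t} =
            (fun z : ℕ → ℝ => Function.update z (m+1) t) '' Qset f x y m (f t) := by
        intro t htA
        have htS : t ∈ Sseq f x y (m+1) := hA3 htA
        ext z
        simp only [mem_inter_iff, mem_preimage, mem_singleton_iff, mem_image]
        constructor
        · rintro ⟨hz, hzt⟩
          refine ⟨z, ⟨hz.1, fun i hi => hz.2.1 i (by omega), ?_⟩, ?_⟩
          · have := hz.2.1 m (by omega)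
            rwa [hzt] at this
          · rw [← hzt]; exact Function.update_eq_self _ _
        · rintro ⟨w, hw, rfl⟩
          refine ⟨⟨?_, ?_, ?_⟩, ?_⟩
          · intro n
            by_cases hn : n = m+1
            · subst hn; simpa using htS
            · simpa [Function.update_of_ne hn] using hw.1 n
          · intro i hi
            by_cases hi' : i = m
            · rw [hi', Function.update_of_ne (by omega : m ≠ m+1), Function.update_self]
              exact hw.2.2
            · rw [Function.update_of_ne (by omega : i ≠ m+1),
                Function.update_of_ne (by omega : i+1 ≠ m+1)]
              exact hw.2.1 i (by omega)
          · simpa using htA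
          · simp
      apply lemG hKc (continuous_apply (m+1))
      · rw [him]; exact hA2
      · intro t ht
        rw [him] at ht
        rw [hfib t ht]
        have htS : t ∈ Sseq f x y (m+1) := hA3 ht
        have htI : t ∈ Icc (0:ℝ) 1 := (nice_S hf hivp hx hy (m+1)).2.2.2 htS
        have hpre : IsPreconnected (Qset f x y m (f t)) :=
          ih (f t) (hf.1 t htI).2.2 (value_preconnected hf hivp htI)
            (S_invariant hf hivp hx hy m htS)
        exact hpre.image _ (continuous_id.update (m+1) continuous_const).continuousOn

end QP

/-- decreasing intersection of compact preconnected sets is preconnected -/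
lemma nested_preconnected {α : Type*} [TopologicalSpace α] [T2Space α] [NormalSpace α]
    (G : ℕ → Set α) (hdec : ∀ m, G (m+1) ⊆ G m) (hcpt : ∀ m, IsCompact (G m))
    (hpre : ∀ m, IsPreconnected (G m)) : IsPreconnected (⋂ m, G m) := by
  set C := ⋂ m, G m with hC
  have hCcl : IsClosed C := isClosed_iInter fun m => (hcpt m).isClosed
  rw [isPreconnected_iff_subset_of_fully_disjoint_closed hCcl]
  intro u v hu hv hcov hdisj
  by_cases hCu : (C ∩ u) = ∅
  · right
    intro z hz
    rcases hcov hz with h | h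
    · exact absurd (by exact ⟨hz, h⟩ : z ∈ C ∩ u) (by rw [hCu]; exact notMem_empty z)
    · exact h
  by_cases hCv : (C ∩ v) = ∅
  · left
    intro z hz
    rcases hcov hz with h | h
    · exact h
    · exact absurd (by exact ⟨hz, h⟩ : z ∈ C ∩ v) (by rw [hCv]; exact notMem_empty z)
  -- both nonempty: contradiction
  exfalso
  have hClu : IsClosed (C ∩ u) := hCcl.inter hu
  have hClv : IsClosed (C ∩ v) := hCcl.inter hv
  have hdisj2 : Disjoint (C ∩ u) (C ∩ v) :=
    (hdisj.mono inter_subset_right inter_subset_right)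
  obtain ⟨U, V, hUo, hVo, hUs, hVs, hUV⟩ := normal_separation hClu hClv hdisj2
  have hcovUV : C ⊆ U ∪ V := by
    intro z hz
    rcases hcov hz with h | h
    · exact Or.inl (hUs ⟨hz, h⟩)
    · exact Or.inr (hVs ⟨hz, h⟩)
  have hexm : ∃ m, G m ⊆ U ∪ V := by
    by_contra hno
    push_neg at hno
    have hne : ∀ m, (G m ∩ (U ∪ V)ᶜ).Nonempty := by
      intro m
      obtain ⟨z, hz1, hz2⟩ := not_subset.1 (hno m)
      exact ⟨z, hz1, hz2⟩
    have hdec' : ∀ m, G (m+1) ∩ (U ∪ V)ᶜ ⊆ G m ∩ (U ∪ V)ᶜ :=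
      fun m => inter_subset_inter_left _ (hdec m)
    have hcl : ∀ m, IsClosed (G m ∩ (U ∪ V)ᶜ) :=
      fun m => (hcpt m).isClosed.inter (hUo.union hVo).isClosed_compl
    have hcc : IsCompact (G 0 ∩ (U ∪ V)ᶜ) := (hcpt 0).inter_right (hUo.union hVo).isClosed_compl
    obtain ⟨z, hz⟩ := IsCompact.nonempty_iInter_of_sequence_nonempty_isCompact_isClosed
      _ hdec' hne hcc hcl
    rw [mem_iInter] at hz
    have hzC : z ∈ C := mem_iInter.2 fun m => (hz m).1
    exact (hz 0).2 (hcovUV hzC)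
  obtain ⟨m, hm⟩ := hexm
  obtain ⟨zu, hzu⟩ := nonempty_iff_ne_empty.2 hCu
  obtain ⟨zv, hzv⟩ := nonempty_iff_ne_empty.2 hCv
  have h1 : (G m ∩ U).Nonempty := ⟨zu, mem_iInter.1 hzu.1 m, hUs hzu⟩
  have h2 : (G m ∩ V).Nonempty := ⟨zv, mem_iInter.1 hzv.1 m, hVs hzv⟩
  obtain ⟨w, hwG, hwU, hwV⟩ := hpre m U V hUo hVo hm h1 h2
  exact (disjoint_left.1 hUV) hwU hwV


/-- if `0 ∈ f^r(p)` and `1 ∈ f^s(q)` for some `p, q ∈ (0,1)`,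
then `f` is organic. -/
theorem stmt14 (f : ℝ → Set ℝ) (hf : USC f) (hsurj : Surj f) (hivp : IVP f)
    (p q : ℝ) (hp : p ∈ Ioo (0:ℝ) 1) (hq : q ∈ Ioo (0:ℝ) 1)
    (r s : ℕ) (h0 : (0:ℝ) ∈ fIter f r p) (h1 : (1:ℝ) ∈ fIter f s q) :
    ∀ x y : ℕ → ℝ, IrreducibleBetween (InvLim f) x y →
      ∃ n : ℕ, imIter f n (uIcc (x n) (y n)) = Icc (0:ℝ) 1 := by
  intro x y hirr
  have hx : x ∈ InvLim f := hirr.1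
  have hy : y ∈ InvLim f := hirr.2.1
  set C : Set (ℕ → ℝ) := ⋂ m, Qset f x y m (Sseq f x y m) with hCdef
  have hGdec : ∀ m, Qset f x y (m+1) (Sseq f x y (m+1)) ⊆ Qset f x y m (Sseq f x y m) := by
    rintro m z ⟨hzS, hzc, _⟩
    exact ⟨hzS, fun i hi => hzc i (by omega), hzS m⟩
  have hGcpt : ∀ m, IsCompact (Qset f x y m (Sseq f x y m)) :=
    fun m => Q_compact hf hivp hx hy isClosed_closure
  have hGpre : ∀ m, IsPreconnected (Qset f x y m (Sseq f x y m)) := by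
    intro m
    have hnS := nice_S hf hivp hx hy m
    exact Q_preconnected hf hivp hx hy m _ hnS.2.1 hnS.2.2.1 subset_rfl
  have hCpre : IsPreconnected C := nested_preconnected _ hGdec hGcpt hGpre
  have hxC : x ∈ C := by
    refine mem_iInter.2 fun m => ⟨fun n => subset_closure (x_mem_U hf hivp hx hy n),
      fun i _ => hx.2 i, subset_closure (x_mem_U hf hivp hx hy m)⟩
  have hyC : y ∈ C := by
    have hyS : ∀ n, y n ∈ Sseq f x y n := by
      intro n
      refine subset_closure (mem_iUnion.2 ⟨0, ?_⟩)
      exact mem_imIter_of_mem right_mem_uIcc (chain_mem hy n 0)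
    exact mem_iInter.2 fun m => ⟨hyS, fun i _ => hy.2 i, hyS m⟩
  have hCsub : C ⊆ InvLim f := by
    intro z hz
    rw [mem_iInter] at hz
    refine ⟨fun i => (nice_S hf hivp hx hy i).2.2.2 ((hz 0).1 i), fun i => ?_⟩
    exact (hz (i+1)).2.1 i (by omega)
  have hCcpt : IsCompact C :=
    (hGcpt 0).of_isClosed_subset
      (isClosed_iInter fun m => Q_closed hf hivp hx hy isClosed_closure)
      (iInter_subset _ 0)
  have hCeq : C = InvLim f :=
    hirr.2.2 C hCsub hCcpt ⟨⟨x, hxC⟩, hCpre⟩ hxC hyC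
  have hS_full : ∀ n, Icc (0:ℝ) 1 ⊆ Sseq f x y n := by
    intro n t ht
    obtain ⟨z, hz, hzn⟩ := orbit_exists hf hsurj ht n
    rw [← hCeq] at hz
    have := (mem_iInter.1 hz n).1 n
    rwa [hzn] at this
  -- a point of (0,1) lies in the union `Useq`
  have hUfull : ∀ (n : ℕ) (c : ℝ), c ∈ Ioo (0:ℝ) 1 → c ∈ Useq f x y n := by
    intro n c hc
    have hUord : OrdConnected (Useq f x y n) := (U_preconnected hf hivp hx hy n).ordConnected
    have hUIcc := U_subset_Icc hf hivp hx hy n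
    have h0S : (0:ℝ) ∈ closure (Useq f x y n) := hS_full n ⟨le_refl 0, zero_le_one⟩
    have h1S : (1:ℝ) ∈ closure (Useq f x y n) := hS_full n ⟨zero_le_one, le_refl 1⟩
    obtain ⟨a, haU, had⟩ := Metric.mem_closure_iff.1 h0S c hc.1
    obtain ⟨b, hbU, hbd⟩ := Metric.mem_closure_iff.1 h1S (1 - c) (by linarith [hc.2])
    rw [Real.dist_eq, abs_of_nonpos (by linarith [(hUIcc haU).1])] at had
    rw [Real.dist_eq, abs_of_nonneg (by linarith [(hUIcc hbU).2])] at hbd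
    exact hUord.out haU hbU ⟨by linarith, by linarith⟩
  obtain ⟨K, hpK⟩ := mem_iUnion.1 (hUfull r p hp)
  obtain ⟨K', hqK⟩ := mem_iUnion.1 (hUfull s q hq)
  have h0D : (0:ℝ) ∈ imIter f (r + K) (Iv x y (r + K)) := by
    rw [imIter_add]
    exact mem_imIter_of_mem hpK h0
  have h1D : (1:ℝ) ∈ imIter f (s + K') (Iv x y (s + K')) := by
    rw [imIter_add]
    exact mem_imIter_of_mem hqK h1
  have hmono : ∀ k k', k ≤ k' → imIter f k (Iv x y k) ⊆ imIter f k' (Iv x y k') := by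
    intro k k' h
    have := J_mono_le hf hivp hx hy 0 h
    simpa [Nat.zero_add] using this
  set N := max (r + K) (s + K') with hN
  have h0N : (0:ℝ) ∈ imIter f N (Iv x y N) := hmono _ _ (le_max_left _ _) h0D
  have h1N : (1:ℝ) ∈ imIter f N (Iv x y N) := hmono _ _ (le_max_right _ _) h1D
  have hnice : Nice (imIter f N (Iv x y N)) := by
    have := nice_J hf hivp hx hy 0 N
    simpa [Nat.zero_add] using this
  refine ⟨N, Subset.antisymm hnice.2.2.2 ?_⟩
  exact hnice.2.2.1.ordConnected.out h0N h1N
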